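/- Let G be a unipolar graph with clique split H, H_1, …, H_k, and let A be the vertex set of an induced antihole of G. Then A is contained in H ∪ H_i for exactly one index i; in particular, the subgraph of the complement of G induced by A is bipartite, so every antihole in a unipolar graph is even. -/

import Mathlib

/-- A clique split of a graph `G`: the vertex set is partitioned into a center clique `H`
and peripheral cliques `P 0, …, P (k-1)` with no edges between distinct peripheral cliques. -/
structure IsCliqueSplit {V : Type*} (G : SimpleGraph V) (H : Set V) {k : ℕ}
    (P : Fin k → Set V) : Prop where
  center_clique : G.IsClique H
  periph_clique : ∀ i, G.IsClique (P i)
  center_disj : ∀ i, Disjoint H (P i)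
  periph_disj : ∀ i j, i ≠ j → Disjoint (P i) (P j)
  covers : H ∪ (⋃ i, P i) = Set.univ
  no_cross : ∀ i j, i ≠ j → ∀ u ∈ P i, ∀ v ∈ P j, ¬ G.Adj u v

/-- A graph is unipolar if it admits a clique split. -/
def Unipolar {V : Type*} (G : SimpleGraph V) : Prop :=
  ∃ (H : Set V) (k : ℕ) (P : Fin k → Set V), IsCliqueSplit G H P
open SimpleGraph
open Fin.NatCast
open Fin.CommRing

/-- Let `G` be unipolar with clique split `H, P 0, …, P (k-1)`, and let `A` be the vertex
set of an induced antihole of `G` (on `n ≥ 5` vertices). Then `A ⊆ H ∪ P i` for exactly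
one index `i`; in particular, the subgraph of the complement of `G` induced by `A` is
bipartite (2-colorable), and the antihole is even. -/
theorem unipolar_antihole_in_center_union_one_periph {V : Type*} (G : SimpleGraph V)
    (H : Set V) {k : ℕ} (P : Fin k → Set V) (hsplit : IsCliqueSplit G H P)
    (n : ℕ) (hn : 5 ≤ n) (f : (SimpleGraph.cycleGraph n)ᶜ ↪g G) (A : Set V)
    (hA : A = Set.range f) :
    (∃! i : Fin k, A ⊆ H ∪ P i) ∧ ((Gᶜ.induce A).Colorable 2) ∧ Even n := by
  classical
  haveI : NeZero n := ⟨by omega⟩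
  subst hA
  -- adjacency through the embedding
  have hadj : ∀ x y : Fin n, G.Adj (f x) (f y) ↔ x ≠ y ∧ ¬ (cycleGraph n).Adj x y := by
    intro x y
    rw [f.map_adj_iff, (cycleGraph n).compl_adj]
  have hval : ∀ d : ℕ, d < n → ((d : Fin n) : ℕ) = d := by
    intro d hd; rw [Fin.val_natCast, Nat.mod_eq_of_lt hd]
  -- shift lemma: distance d with 2 ≤ d ≤ n-2 gives distinct nonadjacent vertices
  have hshift : ∀ (d : ℕ), 2 ≤ d → d + 2 ≤ n → ∀ x : Fin n,
      x ≠ x + (d : Fin n) ∧ ¬ (cycleGraph n).Adj x (x + (d : Fin n)) := by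
    intro d hd2 hdn x
    have hdval : ((d : Fin n) : ℕ) = d := hval d (by omega)
    have hne : x ≠ x + (d : Fin n) := by
      intro h
      have h0 : (d : Fin n) = 0 := by
        have := congrArg (· - x) h
        simpa using this.symm
      rw [h0] at hdval
      simp at hdval
      omega
    refine ⟨hne, ?_⟩
    rw [cycleGraph_adj']
    push_neg
    constructor
    · have h2 : x - (x + (d : Fin n)) = ((n - d : ℕ) : Fin n) := by
        have hsum : ((d : ℕ) : Fin n) + ((n - d : ℕ) : Fin n) = 0 := by
          rw [← Nat.cast_add]
          have : d + (n - d) = n := by omega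
          rw [this, Fin.natCast_self]
        have h3 : x - (x + (d : Fin n)) = -(d : Fin n) := by ring
        rw [h3, neg_eq_of_add_eq_zero_right hsum]
      rw [h2, hval (n - d) (by omega)]
      omega
    · have h2 : (x + (d : Fin n)) - x = (d : Fin n) := by ring
      rw [h2, hdval]
      omega
  have hone : ((1 : Fin n) : ℕ) = 1 := by
    have := hval 1 (by omega); simpa using this
  have hconsec_ne : ∀ x : Fin n, x ≠ x + 1 := by
    intro x h
    have h0 : (1 : Fin n) = 0 := by
      have := congrArg (· - x) h
      simpa using this.symm
    rw [h0] at hone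
    simp at hone
  have hconsec_adj : ∀ x : Fin n, (cycleGraph n).Adj x (x + 1) := by
    intro x
    rw [cycleGraph_adj']
    right
    rw [add_sub_cancel_left, hone]
  have hconsec_nadj : ∀ x : Fin n, ¬ G.Adj (f x) (f (x + 1)) := by
    intro x h
    exact ((hadj x (x + 1)).mp h).2 (hconsec_adj x)
  -- no two consecutive vertices in H
  have hHpair : ∀ x : Fin n, f x ∈ H → f (x + 1) ∈ H → False := by
    intro x h1 h2
    have hne : f x ≠ f (x + 1) := fun h => hconsec_ne x (f.injective h)
    exact hconsec_nadj x (hsplit.center_clique h1 h2 hne)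
  -- no two consecutive vertices in same peripheral clique
  have hPpair : ∀ (x : Fin n) (m : Fin k), f x ∈ P m → f (x + 1) ∈ P m → False := by
    intro x m h1 h2
    have hne : f x ≠ f (x + 1) := fun h => hconsec_ne x (f.injective h)
    exact hconsec_nadj x (hsplit.periph_clique m h1 h2 hne)
  -- cross lemma
  have hcross : ∀ (u v : Fin n) (a b : Fin k), a ≠ b → f u ∈ P a → f v ∈ P b →
      u ≠ v → ¬ (cycleGraph n).Adj u v → False := by
    intro u v a b hab hu hv huv hnadj
    exact hsplit.no_cross a b hab _ hu _ hv ((hadj u v).mpr ⟨huv, hnadj⟩)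
  have hcover : ∀ x : Fin n, f x ∈ H ∨ ∃ m, f x ∈ P m := by
    intro x
    have : f x ∈ H ∪ (⋃ i, P i) := by rw [hsplit.covers]; trivial
    rcases this with h | h
    · exact Or.inl h
    · right; simpa using h
  have d2 := hshift 2 (by norm_num) (by omega)
  have d3 := hshift 3 (by norm_num) (by omega)
  -- core: two consecutive vertices in different peripheral cliques is impossible
  have core : ∀ (x : Fin n) (i j : Fin k), i ≠ j → f x ∈ P i → f (x + 1) ∈ P j → False := by
    intro x i j hij hx hx1
    have e31 : x + ((3 : ℕ) : Fin n) = (x + 1) + ((2 : ℕ) : Fin n) := by push_cast; ring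
    have hx3H : f (x + ((3 : ℕ) : Fin n)) ∈ H := by
      rcases hcover (x + ((3 : ℕ) : Fin n)) with h | ⟨m, hm⟩
      · exact h
      · exfalso
        have hmi : m = i := by
          by_contra hne
          exact hcross x _ i m (fun h => hne h.symm) hx hm (d3 x).1 (d3 x).2
        have hmj : m = j := by
          by_contra hne
          rw [e31] at hm
          exact hcross (x + 1) _ j m (fun h => hne h.symm) hx1 hm (d2 (x + 1)).1 (d2 (x + 1)).2
        exact hij (hmi.symm.trans hmj)
    have em2 : x = (x - ((2 : ℕ) : Fin n)) + ((2 : ℕ) : Fin n) := by ring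
    have em3 : x + 1 = (x - ((2 : ℕ) : Fin n)) + ((3 : ℕ) : Fin n) := by push_cast; ring
    have hxm2H : f (x - ((2 : ℕ) : Fin n)) ∈ H := by
      rcases hcover (x - ((2 : ℕ) : Fin n)) with h | ⟨m, hm⟩
      · exact h
      · exfalso
        have hmi : m = i := by
          by_contra hne
          rw [em2] at hx
          exact hcross _ _ m i hne hm hx (d2 _).1 (d2 _).2
        have hmj : m = j := by
          by_contra hne
          rw [em3] at hx1
          exact hcross _ _ m j hne hm hx1 (d3 _).1 (d3 _).2
        exact hij (hmi.symm.trans hmj)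
    -- x+2 is peripheral with index i
    have ex23 : (x + ((2 : ℕ) : Fin n)) + 1 = x + ((3 : ℕ) : Fin n) := by push_cast; ring
    have hx2P : ∃ m, f (x + ((2 : ℕ) : Fin n)) ∈ P m := by
      rcases hcover (x + ((2 : ℕ) : Fin n)) with h | h
      · exact (hHpair _ h (show f ((x + ((2 : ℕ) : Fin n)) + 1) ∈ H by rw [ex23]; exact hx3H)).elim
      · exact h
    obtain ⟨m2, hm2⟩ := hx2P
    have hm2i : m2 = i := by
      by_contra hne
      exact hcross x _ i m2 (fun h => hne h.symm) hx hm2 (d2 x).1 (d2 x).2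
    -- x-1 is peripheral with index j
    have exm21 : (x - ((2 : ℕ) : Fin n)) + 1 = x - 1 := by push_cast; ring
    have hxm1P : ∃ m, f (x - 1) ∈ P m := by
      rcases hcover (x - 1) with h | h
      · exact (hHpair _ hxm2H (exm21 ▸ h)).elim
      · exact h
    obtain ⟨m3, hm3⟩ := hxm1P
    have em12 : x + 1 = (x - 1) + ((2 : ℕ) : Fin n) := by push_cast; ring
    have hm3j : m3 = j := by
      by_contra hne
      rw [em12] at hx1
      exact hcross _ _ m3 j hne hm3 hx1 (d2 _).1 (d2 _).2
    -- x-1 ∈ P j and x+2 ∈ P i are 3 apart: contradiction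
    have em13 : x + ((2 : ℕ) : Fin n) = (x - 1) + ((3 : ℕ) : Fin n) := by push_cast; ring
    rw [em13] at hm2
    exact hcross _ _ m3 m2 (by rw [hm3j, hm2i]; exact hij.symm) hm3 hm2 (d3 _).1 (d3 _).2
  -- all peripheral vertices of the antihole share the same index
  have hconst : ∀ (u v : Fin n) (a b : Fin k), f u ∈ P a → f v ∈ P b → a = b := by
    intro u v a b hu hv
    by_contra hab
    have huv : u ≠ v := by
      rintro rfl
      exact Set.disjoint_left.mp (hsplit.periph_disj a b hab) hu hv
    by_cases hcyc : (cycleGraph n).Adj u v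
    · rw [cycleGraph_adj'] at hcyc
      rcases hcyc with h | h
      · -- (u - v).val = 1, so u = v + 1
        have : u - v = 1 := by
          apply Fin.ext; rw [h, hone]
        have huv1 : u = v + 1 := by
          rw [sub_eq_iff_eq_add] at this; rw [this]; ring
        exact core v b a (fun h => hab h.symm) hv (huv1 ▸ hu)
      · have : v - u = 1 := by
          apply Fin.ext; rw [h, hone]
        have hvu1 : v = u + 1 := by
          rw [sub_eq_iff_eq_add] at this; rw [this]; ring
        exact core u a b hab hu (hvu1 ▸ hv)
    · exact hcross u v a b hab hu hv huv hcyc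
  -- some vertex is peripheral
  have hexP : ∃ (x : Fin n) (m : Fin k), f x ∈ P m := by
    rcases hcover 0 with h0 | ⟨m, hm⟩
    · rcases hcover 1 with h1 | ⟨m, hm⟩
      · exact (hHpair 0 h0 (by rwa [zero_add])).elim
      · exact ⟨1, m, hm⟩
    · exact ⟨0, m, hm⟩
  obtain ⟨x0, i0, hx0⟩ := hexP
  have hAsub : Set.range f ⊆ H ∪ P i0 := by
    rintro _ ⟨x, rfl⟩
    rcases hcover x with h | ⟨m, hm⟩
    · exact Or.inl h
    · exact Or.inr ((hconst x x0 m i0 hm hx0) ▸ hm)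
  have hboth : ∀ v ∈ Set.range f, v ∉ H → v ∈ P i0 := by
    intro v hv hvH
    rcases hAsub hv with h | h
    · exact absurd h hvH
    · exact h
  refine ⟨⟨i0, hAsub, ?_⟩, ?_, ?_⟩
  · intro j hj
    have hmem : f x0 ∈ H ∪ P j := hj ⟨x0, rfl⟩
    have hnH : f x0 ∉ H := fun h => Set.disjoint_left.mp (hsplit.center_disj i0) h hx0
    rcases hmem with h | h
    · exact absurd h hnH
    · exact hconst x0 x0 j i0 h hx0
  · -- 2-colorability
    refine ⟨SimpleGraph.Coloring.mk (fun v => if (v : V) ∈ H then (0 : Fin 2) else 1) ?_⟩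
    rintro ⟨v, hv⟩ ⟨w, hw⟩ hvw
    have hvw' : Gᶜ.Adj v w := hvw
    rw [G.compl_adj] at hvw'
    obtain ⟨hne, hnadj⟩ := hvw'
    by_cases h1 : v ∈ H <;> by_cases h2 : w ∈ H
    · exact absurd (hsplit.center_clique h1 h2 hne) hnadj
    · simp [h1, h2]
    · simp [h1, h2]
    · exact absurd (hsplit.periph_clique i0 (hboth v hv h1) (hboth w hw h2) hne) hnadj
  · -- evenness
    set g : ℕ → Bool := fun m => decide (f ((m : ℕ) : Fin n) ∈ H) with hg
    have hflip : ∀ m : ℕ, g (m + 1) = !g m := by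
      intro m
      have hcast : (((m + 1 : ℕ)) : Fin n) = ((m : ℕ) : Fin n) + 1 := by push_cast; ring
      by_cases hmem : f ((m : ℕ) : Fin n) ∈ H
      · have h2 : f (((m : ℕ) : Fin n) + 1) ∉ H := fun h => hHpair _ hmem h
        simp [hg, hcast, hmem, h2]
      · have hmP : f ((m : ℕ) : Fin n) ∈ P i0 := hboth _ ⟨_, rfl⟩ hmem
        have h2 : f (((m : ℕ) : Fin n) + 1) ∈ H := by
          rcases hcover (((m : ℕ) : Fin n) + 1) with h | ⟨mm, hmm⟩
          · exact h
          · exact (hPpair _ i0 hmP ((hconst _ _ mm i0 hmm hx0) ▸ hmm)).elim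
        simp [hg, hcast, hmem, h2]
    have hind : ∀ m : ℕ, g m = Bool.xor (decide (Odd m)) (g 0) := by
      intro m
      induction m with
      | zero => simp [Nat.odd_iff]
      | succ m ih =>
        rw [hflip, ih]
        have hod : decide (Odd (m + 1)) = !decide (Odd m) := by
          by_cases h : Odd m <;> simp [Nat.odd_add_one, h]
        rw [hod]
        cases decide (Odd m) <;> cases g 0 <;> rfl
    rw [← Nat.not_odd_iff_even]
    intro hodd
    have h1 : g n = g 0 := by
      have hc : ((n : ℕ) : Fin n) = ((0 : ℕ) : Fin n) := by
        rw [Fin.natCast_self]; simp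
      simp only [hg, hc]
    rw [hind n, decide_eq_true hodd] at h1
    cases hb : g 0 <;> rw [hb] at h1 <;> simp at h1
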